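/- Let R be a commutative ring, n ≥ 1, and x_1,…,x_n, b_1,…,b_n ∈ R. Then: (a) for every k ≥ 0, e_{k+1}^{(b)}(x_1,…,x_n) = Σ_{z=0}^{k} (−1)^z·p_{z+1}^{(b)}(x_1,…,x_n)·e_{k−z}(x_1,…,x_n); and (b) p_{n+1}^{(b)}(x_1,…,x_n) = Σ_{z=0}^{n−1} (−1)^{n−z+1}·p_{z+1}^{(b)}(x_1,…,x_n)·e_{n−z}(x_1,…,x_n). -/
import Mathlib


open Finset

/-- The elementary symmetric polynomial `e_k(x_1,…,x_n)` (with `e_0 = 1`, `e_k = 0` for `k > n`). -/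
def esym {R : Type*} [CommRing R] (n : ℕ) (x : Fin n → R) (k : ℕ) : R :=
  ∑ s ∈ Finset.univ.powersetCard k, ∏ i ∈ s, x i

/-- The weighted elementary symmetric polynomial
`e_k^{(b)}(x_1,…,x_n) = Σ_{i_1<⋯<i_k} (b_{i_1}+⋯+b_{i_k})·x_{i_1}⋯x_{i_k}`. -/
def esymWt {R : Type*} [CommRing R] (n : ℕ) (x b : Fin n → R) (k : ℕ) : R :=
  ∑ s ∈ Finset.univ.powersetCard k, (∑ i ∈ s, b i) * ∏ i ∈ s, x i

/-- The weighted power sum `p_k^{(b)}(x_1,…,x_n) = b_1·x_1^k + ⋯ + b_n·x_n^k`. -/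
def psumWt {R : Type*} [CommRing R] (n : ℕ) (x b : Fin n → R) (k : ℕ) : R :=
  ∑ i, b i * x i ^ k

lemma core_bij {R : Type*} [AddCommMonoid R] {n m : ℕ} (G : Fin n → Finset (Fin n) → R) :
    ∑ s ∈ Finset.univ.powersetCard (m + 1), ∑ i ∈ s, G i s
      = ∑ t ∈ Finset.univ.powersetCard m, ∑ i ∈ tᶜ, G i (insert i t) := by
  rw [Finset.sum_sigma', Finset.sum_sigma']
  refine Finset.sum_nbij' (fun p => ⟨p.1.erase p.2, p.2⟩) (fun p => ⟨insert p.2 p.1, p.2⟩)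
    ?_ ?_ ?_ ?_ ?_
  · rintro ⟨s, i⟩ hp
    simp only [Finset.mem_sigma, Finset.mem_powersetCard_univ] at hp ⊢
    obtain ⟨hs, hi⟩ := hp
    constructor
    · rw [Finset.card_erase_of_mem hi, hs]
      omega
    · simp [Finset.mem_compl]
  · rintro ⟨t, i⟩ hp
    simp only [Finset.mem_sigma, Finset.mem_powersetCard_univ, Finset.mem_compl] at hp ⊢
    obtain ⟨ht, hi⟩ := hp
    constructor
    · rw [Finset.card_insert_of_notMem hi, ht]
    · exact Finset.mem_insert_self _ _
  · rintro ⟨s, i⟩ hp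
    simp only [Finset.mem_sigma, Finset.mem_powersetCard_univ] at hp
    simp [Finset.insert_erase hp.2]
  · rintro ⟨t, i⟩ hp
    simp only [Finset.mem_sigma, Finset.mem_powersetCard_univ, Finset.mem_compl] at hp
    simp [Finset.erase_insert hp.2]
  · rintro ⟨s, i⟩ hp
    simp only [Finset.mem_sigma, Finset.mem_powersetCard_univ] at hp
    simp [Finset.insert_erase hp.2]

/-- Auxiliary quantity `T_z`. -/
def Taux {R : Type*} [CommRing R] (n : ℕ) (x b : Fin n → R) (k z : ℕ) : R :=
  ∑ s ∈ Finset.univ.powersetCard (k - z), ∑ i ∈ sᶜ, b i * x i ^ (z + 1) * ∏ j ∈ s, x j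

/-- Auxiliary quantity `U_z`. -/
def Uaux {R : Type*} [CommRing R] (n : ℕ) (x b : Fin n → R) (k z : ℕ) : R :=
  ∑ s ∈ Finset.univ.powersetCard (k - z), ∑ i ∈ s, b i * x i ^ (z + 1) * ∏ j ∈ s, x j

lemma p_mul_e {R : Type*} [CommRing R] (n : ℕ) (x b : Fin n → R) (k z : ℕ) :
    psumWt n x b (z + 1) * esym n x (k - z) = Taux n x b k z + Uaux n x b k z := by
  rw [psumWt, esym, Taux, Uaux, Finset.sum_mul_sum, Finset.sum_comm, ← Finset.sum_add_distrib]
  refine Finset.sum_congr rfl fun s _ => ?_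
  rw [← Finset.sum_add_sum_compl s]
  exact add_comm _ _

lemma U_eq_T {R : Type*} [CommRing R] (n : ℕ) (x b : Fin n → R) (k z : ℕ) (hz : z < k) :
    Uaux n x b k z = Taux n x b k (z + 1) := by
  rw [Uaux, Taux]
  have h1 : k - z = (k - (z + 1)) + 1 := by omega
  rw [h1, core_bij (fun i s => b i * x i ^ (z + 1) * ∏ j ∈ s, x j)]
  refine Finset.sum_congr rfl fun t _ => Finset.sum_congr rfl fun i hi => ?_
  rw [Finset.mem_compl] at hi
  rw [Finset.prod_insert hi]
  ring

lemma U_last {R : Type*} [CommRing R] (n : ℕ) (x b : Fin n → R) (k : ℕ) :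
    Uaux n x b k k = 0 := by
  rw [Uaux]
  simp

lemma T_zero {R : Type*} [CommRing R] (n : ℕ) (x b : Fin n → R) (k : ℕ) :
    Taux n x b k 0 = esymWt n x b (k + 1) := by
  rw [Taux, esymWt]
  have : ∀ t ∈ Finset.univ.powersetCard (k + 1),
      (∑ i ∈ t, b i) * ∏ i ∈ t, x i = ∑ i ∈ t, b i * ∏ j ∈ t, x j := by
    intro t _; rw [Finset.sum_mul]
  rw [Finset.sum_congr rfl this, core_bij (fun i s => b i * ∏ j ∈ s, x j)]
  have hk0 : k - 0 = k := rfl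
  rw [hk0]
  refine Finset.sum_congr rfl fun t _ => Finset.sum_congr rfl fun i hi => ?_
  rw [Finset.mem_compl] at hi
  rw [Finset.prod_insert hi]
  ring

lemma newton_wt {R : Type*} [CommRing R] (n : ℕ) (x b : Fin n → R) (k : ℕ) :
    esymWt n x b (k + 1) =
      ∑ z ∈ Finset.range (k + 1), (-1 : R) ^ z * psumWt n x b (z + 1) * esym n x (k - z) := by
  have key : ∀ z ∈ Finset.range (k + 1),
      (-1 : R) ^ z * psumWt n x b (z + 1) * esym n x (k - z)
        = (-1 : R) ^ z * (Taux n x b k z + Uaux n x b k z) := by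
    intro z _
    rw [mul_assoc, p_mul_e]
  rw [Finset.sum_congr rfl key, Finset.sum_range_succ, U_last, add_zero]
  have step : ∀ z ∈ Finset.range k,
      (-1 : R) ^ z * (Taux n x b k z + Uaux n x b k z)
        = (fun z => (-1 : R) ^ z * Taux n x b k z) z
          - (fun z => (-1 : R) ^ z * Taux n x b k z) (z + 1) := by
    intro z hz
    rw [Finset.mem_range] at hz
    rw [U_eq_T n x b k z hz]
    simp only [pow_succ]
    ring
  rw [Finset.sum_congr rfl step, Finset.sum_range_sub']
  simp only [pow_zero, one_mul]
  rw [T_zero]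
  ring

theorem stmt19 {R : Type*} [CommRing R] (n : ℕ) (hn : 1 ≤ n) (x b : Fin n → R) :
    (∀ k : ℕ, esymWt n x b (k + 1) =
      ∑ z ∈ Finset.range (k + 1), (-1 : R) ^ z * psumWt n x b (z + 1) * esym n x (k - z)) ∧
    psumWt n x b (n + 1) =
      ∑ z ∈ Finset.range n, (-1 : R) ^ (n - z + 1) * psumWt n x b (z + 1) * esym n x (n - z) := by
  refine ⟨fun k => newton_wt n x b k, ?_⟩
  have h := newton_wt n x b n
  have hE : esymWt n x b (n + 1) = 0 := by
    rw [esymWt]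
    have : (Finset.univ : Finset (Fin n)).powersetCard (n + 1) = ∅ := by
      apply Finset.powersetCard_eq_empty.mpr
      simp
    rw [this, Finset.sum_empty]
  rw [hE, Finset.sum_range_succ] at h
  have he0 : esym n x (n - n) = 1 := by
    rw [Nat.sub_self, esym]
    simp
  rw [he0, mul_one] at h
  have h2 : (-1 : R) ^ n * psumWt n x b (n + 1)
      = - ∑ z ∈ Finset.range n, (-1 : R) ^ z * psumWt n x b (z + 1) * esym n x (n - z) := by
    linear_combination -h
  have h3 : psumWt n x b (n + 1)
      = (-1 : R) ^ n * ((-1 : R) ^ n * psumWt n x b (n + 1)) := by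
    rw [← mul_assoc, ← pow_add, Even.neg_one_pow ⟨n, by ring⟩, one_mul]
  rw [h3, h2, mul_neg, Finset.mul_sum, ← Finset.sum_neg_distrib]
  refine Finset.sum_congr rfl fun z hz => ?_
  rw [Finset.mem_range] at hz
  have hmod : (n - z + 1) % 2 = (n + z + 1) % 2 := by omega
  have : (-1 : R) ^ (n - z + 1) = (-1 : R) ^ n * (-1 : R) ^ z * (-1 : R) := by
    rw [neg_one_pow_eq_pow_mod_two, hmod, ← neg_one_pow_eq_pow_mod_two, pow_succ, pow_add]
  rw [this]
  ring
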